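/- For any nonempty quasi-order (Q,≤_Q), define f : T_f(Q) → i^F_{ω^ω}(Q) recursively by f(·q) = ⟨q⟩ (the sequence of length 1 with value q) and f(·(τ_0,…,τ_{k-1})) = (f(τ_0) + f(τ_1) + ⋯ + f(τ_{k-1}))^ω. Then f is a well-defined order-embedding: for all σ, τ ∈ T_f(Q), σ ≤_T τ if and only if f(σ) ≼ f(τ). -/

import Mathlib

universe u v

open Ordinal

/-- A quasi-order: a reflexive transitive binary relation. -/
def IsQO {Q : Type u} (le : Q → Q → Prop) : Prop :=
  Reflexive le ∧ Transitive le

/-- Finite leaf-labelled trees over `Q`: leaves carry labels from `Q`, and an internal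
node carries a finite nonempty list of children (encoded as a head child plus the list
of remaining children). -/
inductive LTree (Q : Type u) : Type u
  | leaf : Q → LTree Q
  | node : LTree Q → List (LTree Q) → LTree Q

mutual
/-- The tree-homomorphism quasi-order `≤_T` on finite leaf-labelled trees:
`·x ≤_T ·y` iff `le x y`; `·x ≤_T ·(τ₀,…,τ_{l-1})` iff `·x ≤_T τ_j` for some `j < l`;
`·(σ₀,…,σ_{k-1}) ≤_T ·(τ₀,…,τ_{l-1})` iff for every `i < k` there is `j < l` with
`σᵢ ≤_T τ_j`; and `·(σ₀,…,σ_{k-1}) ≤_T ·y` never holds. -/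
inductive TreeLE {Q : Type u} (le : Q → Q → Prop) : LTree Q → LTree Q → Prop
  | leaf {x y : Q} : le x y → TreeLE le (.leaf x) (.leaf y)
  | leafNode {x : Q} {t : LTree Q} {ts : List (LTree Q)} :
      TreeMemLE le (.leaf x) (t :: ts) → TreeLE le (.leaf x) (.node t ts)
  | node {s t : LTree Q} {ss ts : List (LTree Q)} :
      TreeAllLE le (s :: ss) (t :: ts) → TreeLE le (.node s ss) (.node t ts)

/-- `TreeMemLE le a l` means `∃ b ∈ l, TreeLE le a b`. -/
inductive TreeMemLE {Q : Type u} (le : Q → Q → Prop) : LTree Q → List (LTree Q) → Prop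
  | head {a b : LTree Q} {l : List (LTree Q)} : TreeLE le a b → TreeMemLE le a (b :: l)
  | tail {a b : LTree Q} {l : List (LTree Q)} : TreeMemLE le a l → TreeMemLE le a (b :: l)

/-- `TreeAllLE le l₁ l₂` means `∀ a ∈ l₁, ∃ b ∈ l₂, TreeLE le a b`. -/
inductive TreeAllLE {Q : Type u} (le : Q → Q → Prop) : List (LTree Q) → List (LTree Q) → Prop
  | nil {l : List (LTree Q)} : TreeAllLE le [] l
  | cons {a : LTree Q} {l₁ l₂ : List (LTree Q)} :
      TreeMemLE le a l₂ → TreeAllLE le l₁ l₂ → TreeAllLE le (a :: l₁) l₂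
end

/-- A (nonempty) transfinite sequence over `Q` : a length `> 0` together with values;
values at indices `≥ length` are irrelevant junk. -/
structure TSeq (Q : Type u) : Type (u + 1) where
  length : Ordinal.{u}
  length_pos : 0 < length
  val : Ordinal.{u} → Q

/-- Sequence embeddability `σ ≼ τ` : there is a strictly increasing (hence injective) map
of the indices of `σ` into the indices of `τ` which respects the quasi-order on values. -/
def SeqLE {Q : Type u} (le : Q → Q → Prop) (σ τ : TSeq Q) : Prop :=
  ∃ f : Ordinal.{u} → Ordinal.{u},
    (∀ i, i < σ.length → f i < τ.length) ∧
    (∀ i j, i < j → j < σ.length → f i < f j) ∧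
    (∀ i, i < σ.length → le (σ.val i) (τ.val (f i)))

/-- A sequence has finite range if only finitely many elements of `Q` occur in it. -/
def TSeq.FinRange {Q : Type u} (σ : TSeq Q) : Prop :=
  (σ.val '' Set.Iio σ.length).Finite

/-- The proper tail of `σ` starting at index `δ` (of length `-δ + |σ|`). -/
noncomputable def TSeq.tail {Q : Type u} (σ : TSeq Q) (δ : Ordinal.{u})
    (h : δ < σ.length) : TSeq Q where
  length := σ.length - δ
  length_pos := Ordinal.lt_sub.mpr (by simpa using h)
  val := fun i => σ.val (δ + i)

/-- A sequence is indecomposable if it embeds into each of its proper tails. -/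
def Indecomposable {Q : Type u} (le : Q → Q → Prop) (σ : TSeq Q) : Prop :=
  ∀ (δ : Ordinal.{u}) (_ : 0 < δ) (h : δ < σ.length), SeqLE le σ (σ.tail δ h)

open Classical in
/-- Concatenation of transfinite sequences: a copy of `τ` placed after a copy of `σ`. -/
noncomputable def TSeq.concat {Q : Type u} (σ τ : TSeq Q) : TSeq Q where
  length := σ.length + τ.length
  length_pos := lt_of_lt_of_le σ.length_pos (le_add_right le_rfl)
  val := fun i => if i < σ.length then σ.val i else τ.val (i - σ.length)

/-- The concatenation `σ + τ₀ + τ₁ + ⋯` of a nonempty finite list of sequences. -/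
noncomputable def TSeq.concatAll {Q : Type u} (σ : TSeq Q) (l : List (TSeq Q)) : TSeq Q :=
  l.foldl TSeq.concat σ

/-- `σ ^ ω` : the concatenation of `ω` many copies of `σ`;
its value at `|σ|·δ + ι` (for `δ < ω`, `ι < |σ|`), i.e. at `i` with `i % |σ| = ι`,
is `σ(ι)`. -/
noncomputable def TSeq.omegaPow {Q : Type u} (σ : TSeq Q) : TSeq Q where
  length := σ.length * omega0
  length_pos := mul_pos σ.length_pos omega0_pos
  val := fun i => σ.val (i % σ.length)

/-- The map `f : T_f(Q) → i^F_{ω^ω}(Q)` : a leaf `·q` is sent to the sequence `⟨q⟩` of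
length `1`, and `·(τ₀,…,τ_{k-1})` is sent to `(f(τ₀) + f(τ₁) + ⋯ + f(τ_{k-1}))^ω`. -/
noncomputable def treeToSeq {Q : Type u} : LTree Q → TSeq Q
  | .leaf q => ⟨1, zero_lt_one, fun _ => q⟩
  | .node t ts =>
      (TSeq.concatAll (treeToSeq t) (ts.attach.map fun s => treeToSeq s.1)).omegaPow
decreasing_by
  · simp; omega
  · have := List.sizeOf_lt_of_mem s.2
    simp; omega


section Aux

variable {Q : Type u} {le : Q → Q → Prop}

/-- The body of `SeqLE`, for a fixed index map. -/
def SeqEmb (le : Q → Q → Prop) (σ τ : TSeq Q) (f : Ordinal.{u} → Ordinal.{u}) : Prop :=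
  (∀ i, i < σ.length → f i < τ.length) ∧
    (∀ i j, i < j → j < σ.length → f i < f j) ∧
    (∀ i, i < σ.length → le (σ.val i) (τ.val (f i)))

lemma seqLE_iff {σ τ : TSeq Q} : SeqLE le σ τ ↔ ∃ f, SeqEmb le σ τ f := Iff.rfl

lemma ord_sub_lt_sub {s a b : Ordinal} (h1 : s ≤ a) (h2 : a < b) : a - s < b - s := by
  rwa [Ordinal.lt_sub, Ordinal.add_sub_cancel_of_le h1]

lemma seqLE_refl (hr : Reflexive le) (σ : TSeq Q) : SeqLE le σ σ :=
  ⟨id, fun _ hi => hi, fun _ _ h _ => h, fun i _ => hr _⟩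

lemma seqLE_trans (ht : Transitive le) {σ τ ρ : TSeq Q} (h1 : SeqLE le σ τ)
    (h2 : SeqLE le τ ρ) : SeqLE le σ ρ := by
  obtain ⟨f, hf1, hf2, hf3⟩ := h1
  obtain ⟨g, hg1, hg2, hg3⟩ := h2
  exact ⟨g ∘ f, fun i hi => hg1 _ (hf1 i hi),
    fun i j hij hj => hg2 _ _ (hf2 i j hij hj) (hf1 j hj),
    fun i hi => ht (hf3 i hi) (hg3 _ (hf1 i hi))⟩

lemma concat_length (σ τ : TSeq Q) : (σ.concat τ).length = σ.length + τ.length := rfl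

lemma concat_val_left {σ τ : TSeq Q} {i : Ordinal} (h : i < σ.length) :
    (σ.concat τ).val i = σ.val i := if_pos h

lemma concat_val_right {σ τ : TSeq Q} {i : Ordinal} (h : σ.length ≤ i) :
    (σ.concat τ).val i = τ.val (i - σ.length) := if_neg (not_lt.2 h)

lemma seqLE_concat_left (hr : Reflexive le) (σ τ : TSeq Q) : SeqLE le σ (σ.concat τ) := by
  refine ⟨id, fun i hi => lt_of_lt_of_le hi (le_add_right le_rfl), fun _ _ h _ => h,
    fun i hi => ?_⟩
  show le (σ.val i) ((σ.concat τ).val i)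
  rw [concat_val_left hi]
  exact hr _

lemma seqLE_concat_right (hr : Reflexive le) (σ τ : TSeq Q) : SeqLE le τ (σ.concat τ) := by
  refine ⟨fun i => σ.length + i, fun i hi => add_lt_add_right hi _,
    fun i j h _ => add_lt_add_right h _, fun i hi => ?_⟩
  rw [concat_val_right (le_add_right le_rfl), Ordinal.add_sub_cancel]
  exact hr _

lemma concatAll_nil (σ : TSeq Q) : TSeq.concatAll σ [] = σ := rfl

lemma concatAll_cons (σ τ : TSeq Q) (l : List (TSeq Q)) :
    TSeq.concatAll σ (τ :: l) = TSeq.concatAll (σ.concat τ) l := rfl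

lemma le_concatAll (hr : Reflexive le) (ht : Transitive le) {ρ σ : TSeq Q}
    {l : List (TSeq Q)} (h : SeqLE le ρ σ ∨ ρ ∈ l) : SeqLE le ρ (TSeq.concatAll σ l) := by
  induction l generalizing σ with
  | nil => rcases h with h | h; exact h; simp at h
  | cons τ l ih =>
    rw [concatAll_cons]
    rcases h with h | h
    · exact ih (Or.inl (seqLE_trans ht h (seqLE_concat_left hr σ τ)))
    · rcases List.mem_cons.mp h with rfl | h
      · exact ih (Or.inl (seqLE_concat_right hr σ ρ))
      · exact ih (Or.inr h)

lemma omegaPow_length (σ : TSeq Q) : σ.omegaPow.length = σ.length * omega0 := rfl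

lemma omegaPow_val (σ : TSeq Q) (i : Ordinal) : σ.omegaPow.val i = σ.val (i % σ.length) := rfl

lemma length_lt_omegaPow_length (σ : TSeq Q) : σ.length < σ.omegaPow.length := by
  rw [omegaPow_length]
  conv_lhs => rw [← mul_one σ.length]
  exact mul_lt_mul_of_pos_left one_lt_omega0 σ.length_pos

lemma seqLE_omegaPow (hr : Reflexive le) (σ : TSeq Q) : SeqLE le σ σ.omegaPow := by
  refine ⟨id, fun i hi => hi.trans (length_lt_omegaPow_length σ), fun _ _ h _ => h,
    fun i hi => ?_⟩
  show le (σ.val i) (σ.omegaPow.val i)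
  rw [omegaPow_val, Ordinal.mod_eq_of_lt hi]
  exact hr _

/-- The key splitting lemma: an indecomposable sequence embedded into `τ` embeds either
entirely below `β` or entirely at or above `β` (preserving any upper bound `γ`). -/
lemma seqEmb_split (ht : Transitive le) {χ τ : TSeq Q} (hχ : Indecomposable le χ)
    {f : Ordinal → Ordinal} (hf : SeqEmb le χ τ f) (β γ : Ordinal)
    (hub : ∀ i, i < χ.length → f i < γ) :
    (∃ g, SeqEmb le χ τ g ∧ ∀ i, i < χ.length → g i < β) ∨
      (∃ g, SeqEmb le χ τ g ∧ ∀ i, i < χ.length → β ≤ g i ∧ g i < γ) := by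
  by_cases hall : ∀ i, i < χ.length → f i < β
  · exact Or.inl ⟨f, hf, hall⟩
  right
  push_neg at hall
  obtain ⟨δ₀, hδ₀len, hδ₀β⟩ := hall
  have hSne : Set.Nonempty {i | i < χ.length ∧ β ≤ f i} := ⟨δ₀, hδ₀len, hδ₀β⟩
  set δ := sInf {i | i < χ.length ∧ β ≤ f i} with hδdef
  have hδS : δ < χ.length ∧ β ≤ f δ := csInf_mem hSne
  rcases eq_or_lt_of_le (zero_le (a := δ)) with h0 | h0
  · refine ⟨f, hf, fun i hi => ⟨?_, hub i hi⟩⟩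
    rcases eq_or_lt_of_le (zero_le (a := i)) with hi0 | hi0
    · rw [← h0] at hδS
      rw [← hi0]
      exact hδS.2
    · have hmono := hf.2.1 0 i hi0 hi
      rw [← h0] at hδS
      exact le_of_lt (lt_of_le_of_lt hδS.2 hmono)
  · obtain ⟨h, hh1, hh2, hh3⟩ := hχ δ h0 hδS.1
    have hdom : ∀ i, i < χ.length → δ + h i < χ.length := fun i hi =>
      Ordinal.lt_sub.mp (hh1 i hi)
    refine ⟨fun i => f (δ + h i), ⟨fun i hi => hf.1 _ (hdom i hi),
      fun i j hij hj => hf.2.1 _ _ (add_lt_add_right (hh2 i j hij hj) δ) (hdom j hj),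
      fun i hi => ht (hh3 i hi) (hf.2.2 _ (hdom i hi))⟩, fun i hi => ?_⟩
    show β ≤ f (δ + h i) ∧ f (δ + h i) < γ
    refine ⟨?_, hub _ (hdom i hi)⟩
    rcases eq_or_lt_of_le ((le_add_right (le_refl δ) : δ ≤ δ + h i)) with he | he
    · rw [← he]; exact hδS.2
    · exact le_of_lt (lt_of_le_of_lt hδS.2 (hf.2.1 _ _ he (hdom i hi)))

lemma indec_le_concat (ht : Transitive le) {χ σ τ : TSeq Q} (hχ : Indecomposable le χ)
    (h : SeqLE le χ (σ.concat τ)) : SeqLE le χ σ ∨ SeqLE le χ τ := by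
  obtain ⟨f, hf⟩ := h
  rcases seqEmb_split ht hχ hf σ.length (σ.concat τ).length hf.1 with
    ⟨g, hg, hb⟩ | ⟨g, hg, hb⟩
  · left
    refine ⟨g, hb, hg.2.1, fun i hi => ?_⟩
    have := hg.2.2 i hi
    rwa [concat_val_left (hb i hi)] at this
  · right
    refine ⟨fun i => g i - σ.length, fun i hi => ?_, fun i j hij hj => ?_, fun i hi => ?_⟩
    · have h1 := (hb i hi).1
      have h2 := (hb i hi).2
      rw [concat_length] at h2
      rwa [← add_lt_add_iff_left σ.length, Ordinal.add_sub_cancel_of_le h1]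
    · exact ord_sub_lt_sub (hb i (hij.trans hj)).1 (hg.2.1 i j hij hj)
    · have := hg.2.2 i hi
      rwa [concat_val_right (hb i hi).1] at this

lemma indec_le_concatAll (ht : Transitive le) {χ σ : TSeq Q} {l : List (TSeq Q)}
    (hχ : Indecomposable le χ) (h : SeqLE le χ (TSeq.concatAll σ l)) :
    SeqLE le χ σ ∨ ∃ τ ∈ l, SeqLE le χ τ := by
  induction l generalizing σ with
  | nil => exact Or.inl h
  | cons τ l ih =>
    rw [concatAll_cons] at h
    rcases ih h with h' | ⟨ρ, hρ, h'⟩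
    · rcases indec_le_concat ht hχ h' with h'' | h''
      · exact Or.inl h''
      · exact Or.inr ⟨τ, List.mem_cons_self, h''⟩
    · exact Or.inr ⟨ρ, List.mem_cons_of_mem _ hρ, h'⟩

lemma nat_mul_le_omegaPow_length (B : TSeq Q) (n : ℕ) :
    B.length * (n : Ordinal) ≤ B.omegaPow.length := by
  rw [omegaPow_length]
  exact mul_le_mul_right (Ordinal.nat_lt_omega0 n).le _

/-- An indecomposable sequence embedding into `B^ω` with image bounded by `B.length * n`
embeds into `B` itself. -/
lemma indec_le_of_bounded (ht : Transitive le) {χ B : TSeq Q} (hχ : Indecomposable le χ) :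
    ∀ (n : ℕ) (f : Ordinal → Ordinal), SeqEmb le χ B.omegaPow f →
      (∀ i, i < χ.length → f i < B.length * n) → SeqLE le χ B := by
  intro n
  induction n with
  | zero =>
    intro f _ hb
    have := hb 0 χ.length_pos
    simp only [Nat.cast_zero, mul_zero] at this
    exact (not_lt_zero this).elim
  | succ n ih =>
    intro f hf hb
    rcases seqEmb_split ht hχ hf (B.length * n) (B.length * (n + 1 : ℕ)) hb with
      ⟨g, hg, hbb⟩ | ⟨g, hg, hbb⟩
    · exact ih g hg hbb
    · have hsucc : B.length * ((n : ℕ) + 1 : ℕ) = B.length * n + B.length := by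
        push_cast
        rw [mul_add, mul_one]
      have hlt : ∀ i, i < χ.length → g i - B.length * n < B.length := by
        intro i hi
        have h1 := (hbb i hi).1
        have h2 := (hbb i hi).2
        rw [hsucc] at h2
        rwa [← add_lt_add_iff_left (B.length * n), Ordinal.add_sub_cancel_of_le h1]
      refine ⟨fun i => g i - B.length * n, hlt, fun i j hij hj =>
        ord_sub_lt_sub (hbb i (hij.trans hj)).1 (hg.2.1 i j hij hj), fun i hi => ?_⟩
      have hv := hg.2.2 i hi
      rw [omegaPow_val] at hv
      have hmod : g i % B.length = g i - B.length * n := by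
        conv_lhs => rw [← Ordinal.add_sub_cancel_of_le (hbb i hi).1]
        rw [Ordinal.mul_add_mod_self, Ordinal.mod_eq_of_lt (hlt i hi)]
      rwa [hmod] at hv

/-- From `σ ≼ B` we get an embedding of `σ` into `B^ω` bounded by `B.length * 1`. -/
lemma emb_omegaPow_of_le {σ B : TSeq Q} (h : SeqLE le σ B) :
    ∃ f, SeqEmb le σ B.omegaPow f ∧ ∀ i, i < σ.length → f i < B.length * (1 : ℕ) := by
  obtain ⟨e, he1, he2, he3⟩ := h
  refine ⟨e, ⟨fun i hi => (he1 i hi).trans (length_lt_omegaPow_length B), he2,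
    fun i hi => ?_⟩, fun i hi => by simpa using he1 i hi⟩
  rw [omegaPow_val, Ordinal.mod_eq_of_lt (he1 i hi)]
  exact he3 i hi

/-- Concatenating boundedly-embeddable pieces gives a bounded embedding into `B^ω`. -/
lemma concatAll_emb (ht : Transitive le) {B : TSeq Q} :
    ∀ (l : List (TSeq Q)) (σ : TSeq Q) (n : ℕ),
      (∃ f, SeqEmb le σ B.omegaPow f ∧ ∀ i, i < σ.length → f i < B.length * n) →
      (∀ τ ∈ l, SeqLE le τ B) →
      ∃ f, SeqEmb le (TSeq.concatAll σ l) B.omegaPow f ∧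
        ∀ i, i < (TSeq.concatAll σ l).length → f i < B.length * ((n + l.length : ℕ)) := by
  intro l
  induction l with
  | nil =>
    intro σ n hσ _
    simpa [concatAll_nil] using hσ
  | cons τ l ih =>
    intro σ n hσ hl
    obtain ⟨f, hf, hbf⟩ := hσ
    obtain ⟨e, he1, he2, he3⟩ := hl τ (List.mem_cons_self)
    rw [concatAll_cons]
    have key : ∃ f, SeqEmb le (σ.concat τ) B.omegaPow f ∧
        ∀ i, i < (σ.concat τ).length → f i < B.length * ((n + 1 : ℕ)) := by
      have hsucc : B.length * ((n + 1 : ℕ) : Ordinal) = B.length * n + B.length := by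
        push_cast
        rw [mul_add, mul_one]
      refine ⟨fun i => if i < σ.length then f i else B.length * n + e (i - σ.length),
        ⟨fun i hi => ?_, fun i j hij hj => ?_, fun i hi => ?_⟩, fun i hi => ?_⟩
      all_goals dsimp only
      · split
        · exact hf.1 i ‹_›
        · next h =>
          rw [concat_length] at hi
          have hr : i - σ.length < τ.length := by
            rw [← add_lt_add_iff_left σ.length,
              Ordinal.add_sub_cancel_of_le (not_lt.1 h)]
            exact hi
          calc B.length * n + e (i - σ.length) < B.length * n + B.length :=
                add_lt_add_right (he1 _ hr) _
            _ = B.length * ((n + 1 : ℕ)) := hsucc.symm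
            _ ≤ B.omegaPow.length := nat_mul_le_omegaPow_length B (n + 1)
      · rw [concat_length] at hj
        rcases lt_or_ge j σ.length with hjs | hjs
        · rw [if_pos (hij.trans hjs), if_pos hjs]
          exact hf.2.1 i j hij hjs
        · rw [if_neg (not_lt.2 hjs)]
          have hrj : j - σ.length < τ.length := by
            rw [← add_lt_add_iff_left σ.length, Ordinal.add_sub_cancel_of_le hjs]
            exact hj
          rcases lt_or_ge i σ.length with his | his
          · rw [if_pos his]
            exact (hbf i his).trans_le (le_add_right le_rfl)
          · rw [if_neg (not_lt.2 his)]
            refine add_lt_add_right (he2 _ _ ?_ hrj) _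
            exact ord_sub_lt_sub his hij
      · rw [concat_length] at hi
        split
        · next h =>
          have := hf.2.2 i h
          rwa [concat_val_left h]
        · next h =>
          have hs := not_lt.1 h
          have hr : i - σ.length < τ.length := by
            rw [← add_lt_add_iff_left σ.length, Ordinal.add_sub_cancel_of_le hs]
            exact hi
          rw [concat_val_right hs, omegaPow_val, Ordinal.mul_add_mod_self,
            Ordinal.mod_eq_of_lt (he1 _ hr)]
          exact he3 _ hr
      · rw [concat_length] at hi
        split
        · next h => exact lt_of_lt_of_le (hbf i h) (by rw [hsucc]; exact le_add_right le_rfl)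
        · next h =>
          have hs := not_lt.1 h
          have hr : i - σ.length < τ.length := by
            rw [← add_lt_add_iff_left σ.length, Ordinal.add_sub_cancel_of_le hs]
            exact hi
          rw [hsucc]
          exact add_lt_add_right (he1 _ hr) _
    have hres := ih (σ.concat τ) (n + 1) key
      (fun ρ hρ => hl ρ (List.mem_cons_of_mem _ hρ))
    have hnat : n + (τ :: l).length = n + 1 + l.length := by
      simp [List.length_cons]; omega
    rw [hnat]
    exact hres

/-- A bounded embedding of `A` into `B^ω` yields `A^ω ≼ B^ω`. -/
lemma omegaPow_emb (ht : Transitive le) {A B : TSeq Q} {n : ℕ} {f : Ordinal → Ordinal}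
    (hf : SeqEmb le A B.omegaPow f) (hb : ∀ i, i < A.length → f i < B.length * n) :
    SeqLE le A.omegaPow B.omegaPow := by
  rcases Nat.eq_zero_or_pos n with rfl | hn
  · have := hb 0 A.length_pos
    simp only [Nat.cast_zero, mul_zero] at this
    exact (not_lt_zero this).elim
  have ha : A.length ≠ 0 := A.length_pos.ne'
  set c : Ordinal := B.length * n with hc
  have hcω : c * omega0 = B.length * omega0 := by
    rw [hc, mul_assoc, Ordinal.natCast_mul_omega0 hn]
  refine ⟨fun i => c * (i / A.length) + f (i % A.length), fun i hi => ?_, fun i j hij hj => ?_,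
    fun i hi => ?_⟩
  · rw [omegaPow_length] at hi ⊢
    have hq : i / A.length < omega0 := (Ordinal.div_lt ha).2 hi
    have hr : i % A.length < A.length := Ordinal.mod_lt i ha
    calc c * (i / A.length) + f (i % A.length) < c * (i / A.length) + c :=
          add_lt_add_right (hb _ hr) _
      _ = c * (i / A.length + 1) := by rw [mul_add, mul_one]
      _ ≤ c * omega0 := mul_le_mul_right
          (by rw [Ordinal.add_one_eq_succ]; exact (Ordinal.isSuccLimit_omega0.succ_lt hq).le) _
      _ = B.length * omega0 := hcω
  · show c * (i / A.length) + f (i % A.length) < c * (j / A.length) + f (j % A.length)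
    rw [omegaPow_length] at hj
    have hqj : j / A.length < omega0 := (Ordinal.div_lt ha).2 hj
    have hrj : j % A.length < A.length := Ordinal.mod_lt j ha
    have hri : i % A.length < A.length := Ordinal.mod_lt i ha
    have hqle : i / A.length ≤ j / A.length := Ordinal.div_le_left hij.le _
    rcases eq_or_lt_of_le hqle with hq | hq
    · have hrlt : i % A.length < j % A.length := by
        have hi' := Ordinal.div_add_mod i A.length
        have hj' := Ordinal.div_add_mod j A.length
        rw [← hi', ← hj', hq] at hij
        exact (add_lt_add_iff_left _).1 hij
      rw [hq]
      exact add_lt_add_right (hf.2.1 _ _ hrlt hrj) _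
    · calc c * (i / A.length) + f (i % A.length) < c * (i / A.length) + c :=
            add_lt_add_right (hb _ hri) _
        _ = c * (i / A.length + 1) := by rw [mul_add, mul_one]
        _ ≤ c * (j / A.length) := mul_le_mul_right
            (by rw [Ordinal.add_one_eq_succ]; exact Order.succ_le_of_lt hq) _
        _ ≤ c * (j / A.length) + f (j % A.length) := le_add_right le_rfl
  · have hri : i % A.length < A.length := Ordinal.mod_lt i ha
    have hv := hf.2.2 _ hri
    rw [omegaPow_val] at hv
    show le (A.omegaPow.val i) (B.omegaPow.val (c * (i / A.length) + f (i % A.length)))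
    rw [omegaPow_val, omegaPow_val, hc, mul_assoc, Ordinal.mul_add_mod_self]
    exact hv

lemma indec_omegaPow (hr : Reflexive le) (σ : TSeq Q) : Indecomposable le σ.omegaPow := by
  intro δ hδ hlt
  have hb : σ.length ≠ 0 := σ.length_pos.ne'
  rw [omegaPow_length] at hlt
  set ν : Ordinal := Order.succ (δ / σ.length) with hν
  have hνω : ν < omega0 := Ordinal.isSuccLimit_omega0.succ_lt ((Ordinal.div_lt hb).2 hlt)
  have hδν : δ ≤ σ.length * ν := (Ordinal.lt_mul_succ_div δ hb).le
  have hkey : ∀ i : Ordinal, δ + ((σ.length * ν - δ) + i) = σ.length * ν + i := by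
    intro i
    rw [← add_assoc, Ordinal.add_sub_cancel_of_le hδν]
  refine ⟨fun i => (σ.length * ν - δ) + i, fun i hi => ?_, fun i j hij _ => ?_, fun i hi => ?_⟩
  · show (σ.length * ν - δ) + i < σ.length * omega0 - δ
    rw [Ordinal.lt_sub, hkey]
    rw [omegaPow_length] at hi
    calc σ.length * ν + i < σ.length * ν + σ.length * omega0 := add_lt_add_right hi _
      _ = σ.length * (ν + omega0) := (mul_add _ _ _).symm
      _ = σ.length * omega0 := by rw [Ordinal.add_omega0 hνω]
  · exact add_lt_add_right hij _
  · show le (σ.omegaPow.val i) (σ.omegaPow.val (δ + ((σ.length * ν - δ) + i)))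
    rw [hkey, omegaPow_val, omegaPow_val, Ordinal.mul_add_mod_self]
    exact hr _

lemma finRange_concat {σ τ : TSeq Q} (h1 : σ.FinRange) (h2 : τ.FinRange) :
    (σ.concat τ).FinRange := by
  apply Set.Finite.subset (h1.union h2)
  rintro q ⟨i, hi, rfl⟩
  simp only [Set.mem_Iio, concat_length] at hi
  rcases lt_or_ge i σ.length with h | h
  · left
    exact ⟨i, h, (concat_val_left h).symm⟩
  · right
    refine ⟨i - σ.length, ?_, (concat_val_right h).symm⟩
    show i - σ.length < τ.length
    rwa [← add_lt_add_iff_left σ.length, Ordinal.add_sub_cancel_of_le h]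

lemma finRange_concatAll {σ : TSeq Q} {l : List (TSeq Q)} (h1 : σ.FinRange)
    (h2 : ∀ τ ∈ l, TSeq.FinRange τ) : (TSeq.concatAll σ l).FinRange := by
  induction l generalizing σ with
  | nil => exact h1
  | cons τ l ih =>
    rw [concatAll_cons]
    exact ih (finRange_concat h1 (h2 τ (List.mem_cons_self)))
      (fun ρ hρ => h2 ρ (List.mem_cons_of_mem _ hρ))

lemma finRange_omegaPow {σ : TSeq Q} (h : σ.FinRange) : σ.omegaPow.FinRange := by
  apply Set.Finite.subset h
  rintro q ⟨i, _, rfl⟩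
  exact ⟨i % σ.length, Ordinal.mod_lt i σ.length_pos.ne', rfl⟩

lemma omega0_lt_omega0_opow : omega0 < omega0 ^ omega0 := by
  conv_lhs => rw [← opow_one omega0]
  rw [Ordinal.opow_lt_opow_iff_right one_lt_omega0]
  exact one_lt_omega0

lemma length_concatAll_lt {σ : TSeq Q} {l : List (TSeq Q)}
    (h1 : σ.length < omega0 ^ omega0) (h2 : ∀ τ ∈ l, TSeq.length τ < omega0 ^ omega0) :
    (TSeq.concatAll σ l).length < omega0 ^ omega0 := by
  induction l generalizing σ with
  | nil => exact h1
  | cons τ l ih =>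
    rw [concatAll_cons]
    refine ih ?_ (fun ρ hρ => h2 ρ (List.mem_cons_of_mem _ hρ))
    rw [concat_length]
    exact Ordinal.principal_add_omega0_opow omega0 h1 (h2 τ (List.mem_cons_self))

lemma length_omegaPow_lt {σ : TSeq Q} (h : σ.length < omega0 ^ omega0) :
    σ.omegaPow.length < omega0 ^ omega0 := by
  rw [omegaPow_length]
  have := Ordinal.principal_mul_omega0_opow_opow 1
  rw [opow_one] at this
  exact this h omega0_lt_omega0_opow

lemma treeToSeq_leaf (q : Q) : treeToSeq (LTree.leaf q) = ⟨1, zero_lt_one, fun _ => q⟩ := by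
  rw [treeToSeq]

lemma treeToSeq_node (t : LTree Q) (ts : List (LTree Q)) :
    treeToSeq (LTree.node t ts) =
      (TSeq.concatAll (treeToSeq t) (ts.map treeToSeq)).omegaPow := by
  rw [treeToSeq]
  congr 2
  simp

lemma sizeOf_lt_node {Q : Type u} {d t : LTree Q} {ts : List (LTree Q)} (h : d ∈ t :: ts) :
    sizeOf d < sizeOf (LTree.node t ts) := by
  rcases List.mem_cons.mp h with rfl | h
  · simp
    omega
  · have := List.sizeOf_lt_of_mem h
    simp
    omega

lemma treeMemLE_iff {a : LTree Q} {l : List (LTree Q)} :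
    TreeMemLE le a l ↔ ∃ b ∈ l, TreeLE le a b := by
  constructor
  · intro h
    induction l with
    | nil => cases h
    | cons c l ih =>
      cases h with
      | head h => exact ⟨c, List.mem_cons_self, h⟩
      | tail h => obtain ⟨b, hb, hh⟩ := ih h; exact ⟨b, List.mem_cons_of_mem _ hb, hh⟩
  · rintro ⟨b, hb, h⟩
    induction l with
    | nil => simp at hb
    | cons c l ih =>
      rcases List.mem_cons.mp hb with rfl | hb'
      · exact .head h
      · exact .tail (ih hb')

lemma treeAllLE_iff {l₁ l₂ : List (LTree Q)} :
    TreeAllLE le l₁ l₂ ↔ ∀ a ∈ l₁, ∃ b ∈ l₂, TreeLE le a b := by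
  constructor
  · intro h
    induction l₁ with
    | nil => simp
    | cons a l ih =>
      cases h with
      | cons hm hall =>
        intro a' ha'
        rcases List.mem_cons.mp ha' with rfl | ha'
        · exact treeMemLE_iff.1 hm
        · exact ih hall a' ha'
  · intro h
    induction l₁ with
    | nil => exact .nil
    | cons a l ih =>
      exact .cons (treeMemLE_iff.2 (h a (List.mem_cons_self)))
        (ih fun a' ha' => h a' (List.mem_cons_of_mem _ ha'))

/-- All the per-tree facts, by strong induction on the size of the tree. -/
lemma treeToSeq_facts (hr : Reflexive le) (τ : LTree Q) :
    (treeToSeq τ).length < omega0 ^ omega0 ∧ (treeToSeq τ).FinRange ∧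
      Indecomposable le (treeToSeq τ) := by
  suffices H : ∀ (n : ℕ) (τ : LTree Q), sizeOf τ ≤ n →
      (treeToSeq τ).length < omega0 ^ omega0 ∧ (treeToSeq τ).FinRange ∧
        Indecomposable le (treeToSeq τ) from H _ τ le_rfl
  intro n
  induction n using Nat.strong_induction_on with
  | _ n ih =>
  intro τ hτ
  cases τ with
  | leaf q =>
    rw [treeToSeq_leaf]
    refine ⟨one_lt_omega0.trans omega0_lt_omega0_opow, ?_, ?_⟩
    · apply Set.Finite.subset (Set.finite_singleton q)
      rintro x ⟨i, _, rfl⟩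
      rfl
    · intro δ hδ hlt
      exact ((Ordinal.lt_one_iff_zero.1 hlt ▸ hδ).false).elim
  | node t ts =>
    rw [treeToSeq_node]
    have hsub : ∀ d ∈ t :: ts, (treeToSeq d).length < omega0 ^ omega0 ∧
        (treeToSeq d).FinRange ∧ Indecomposable le (treeToSeq d) := by
      intro d hd
      have hlt := sizeOf_lt_node hd
      exact ih (sizeOf d) (by omega) d le_rfl
    have hmem : ∀ ρ ∈ ts.map treeToSeq, ∃ d ∈ ts, ρ = treeToSeq d := by
      intro ρ hρ
      obtain ⟨d, hd, rfl⟩ := List.mem_map.1 hρ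
      exact ⟨d, hd, rfl⟩
    refine ⟨?_, ?_, indec_omegaPow hr _⟩
    · apply length_omegaPow_lt
      apply length_concatAll_lt (hsub t (List.mem_cons_self)).1
      intro ρ hρ
      obtain ⟨d, hd, rfl⟩ := hmem ρ hρ
      exact (hsub d (List.mem_cons_of_mem _ hd)).1
    · apply finRange_omegaPow
      apply finRange_concatAll (hsub t (List.mem_cons_self)).2.1
      intro ρ hρ
      obtain ⟨d, hd, rfl⟩ := hmem ρ hρ
      exact (hsub d (List.mem_cons_of_mem _ hd)).2.1

lemma treeToSeq_iff (hr : Reflexive le) (ht : Transitive le) (σ τ : LTree Q) :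
    TreeLE le σ τ ↔ SeqLE le (treeToSeq σ) (treeToSeq τ) := by
  suffices H : ∀ (n : ℕ) (σ τ : LTree Q), sizeOf σ + sizeOf τ ≤ n →
      (TreeLE le σ τ ↔ SeqLE le (treeToSeq σ) (treeToSeq τ)) from H _ σ τ le_rfl
  clear σ τ
  intro n
  induction n using Nat.strong_induction_on with
  | _ n ih =>
  intro σ τ hn
  have IH : ∀ σ' τ' : LTree Q, sizeOf σ' + sizeOf τ' < sizeOf σ + sizeOf τ →
      (TreeLE le σ' τ' ↔ SeqLE le (treeToSeq σ') (treeToSeq τ')) := fun σ' τ' h =>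
    ih (sizeOf σ' + sizeOf τ') (lt_of_lt_of_le h hn) σ' τ' le_rfl
  clear ih hn
  cases σ with
  | leaf x =>
    cases τ with
    | leaf y =>
      constructor
      · intro h
        cases h with
        | leaf h =>
          rw [treeToSeq_leaf, treeToSeq_leaf]
          exact ⟨fun _ => 0, fun i _ => zero_lt_one,
            fun i j hij hj =>
              (not_lt_zero (Ordinal.lt_one_iff_zero.1 hj ▸ hij)).elim,
            fun i _ => h⟩
      · intro hseq
        rw [treeToSeq_leaf, treeToSeq_leaf] at hseq
        obtain ⟨f, hf⟩ := hseq
        exact TreeLE.leaf (hf.2.2 0 zero_lt_one)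
    | node t ts =>
      rw [treeToSeq_leaf, treeToSeq_node]
      set C := TSeq.concatAll (treeToSeq t) (ts.map treeToSeq) with hC
      constructor
      · intro h
        cases h with
        | leafNode hmem =>
          obtain ⟨d, hd, hld⟩ := treeMemLE_iff.1 hmem
          have hsz : sizeOf (LTree.leaf x) + sizeOf d <
              sizeOf (LTree.leaf x) + sizeOf (LTree.node t ts) := by
            have := sizeOf_lt_node hd
            omega
          have hseq := (IH _ d hsz).1 hld
          rw [treeToSeq_leaf] at hseq
          refine seqLE_trans ht hseq ?_
          refine seqLE_trans ht ?_ (seqLE_omegaPow hr _)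
          apply le_concatAll hr ht
          rcases List.mem_cons.mp hd with rfl | hd'
          · exact Or.inl (seqLE_refl hr _)
          · exact Or.inr (List.mem_map_of_mem (f := treeToSeq) hd')
      · intro hseq
        obtain ⟨g, hg⟩ := hseq
        have hin : Indecomposable le (⟨1, zero_lt_one, fun _ => x⟩ : TSeq Q) := by
          have h' := (treeToSeq_facts hr (LTree.leaf x)).2.2
          rwa [treeToSeq_leaf] at h'
        have hltC : SeqLE le (⟨1, zero_lt_one, fun _ => x⟩ : TSeq Q) C := by
          refine ⟨fun _ => g 0 % C.length,
            fun i _ => Ordinal.mod_lt _ C.length_pos.ne', fun i j hij hj =>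
              (not_lt_zero (Ordinal.lt_one_iff_zero.1 hj ▸ hij)).elim,
            fun i _ => ?_⟩
          have hv := hg.2.2 0 zero_lt_one
          rw [omegaPow_val] at hv
          exact hv
        rcases indec_le_concatAll ht hin hltC with h1 | ⟨ρ, hρ, h1⟩
        · have hsz : sizeOf (LTree.leaf x) + sizeOf t <
              sizeOf (LTree.leaf x) + sizeOf (LTree.node t ts) := by
            have := sizeOf_lt_node ((List.mem_cons_self (a := t) (l := ts)))
            omega
          have := (IH _ t hsz).2 (by rw [treeToSeq_leaf]; exact h1)
          exact TreeLE.leafNode (treeMemLE_iff.2 ⟨t, List.mem_cons_self, this⟩)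
        · obtain ⟨d, hd, rfl⟩ := List.mem_map.1 hρ
          have hsz : sizeOf (LTree.leaf x) + sizeOf d <
              sizeOf (LTree.leaf x) + sizeOf (LTree.node t ts) := by
            have := sizeOf_lt_node (List.mem_cons_of_mem t hd)
            omega
          have := (IH _ d hsz).2 (by rw [treeToSeq_leaf]; exact h1)
          exact TreeLE.leafNode
            (treeMemLE_iff.2 ⟨d, List.mem_cons_of_mem _ hd, this⟩)
  | node s ss =>
    cases τ with
    | leaf y =>
      constructor
      · intro h
        cases h
      · intro hseq
        exfalso
        rw [treeToSeq_node, treeToSeq_leaf] at hseq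
        obtain ⟨g, hg1, hg2, hg3⟩ := hseq
        set C := TSeq.concatAll (treeToSeq s) (ss.map treeToSeq) with hC
        have h1 : (1 : Ordinal) < C.omegaPow.length := by
          rw [omegaPow_length]
          calc (1 : Ordinal) < omega0 := one_lt_omega0
            _ = 1 * omega0 := (one_mul _).symm
            _ ≤ C.length * omega0 :=
              mul_le_mul_left (Order.one_le_iff_pos.2 C.length_pos) _
        have hlt := hg2 0 1 zero_lt_one h1
        have h2 := hg1 1 h1
        rw [Ordinal.lt_one_iff_zero] at h2
        rw [h2] at hlt
        exact not_lt_zero hlt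
    | node t ts =>
      rw [treeToSeq_node, treeToSeq_node]
      set A := TSeq.concatAll (treeToSeq s) (ss.map treeToSeq) with hA
      set B := TSeq.concatAll (treeToSeq t) (ts.map treeToSeq) with hB
      have hszc : ∀ c ∈ s :: ss, ∀ d ∈ t :: ts,
          sizeOf c + sizeOf d < sizeOf (LTree.node s ss) + sizeOf (LTree.node t ts) :=
        fun c hc d hd => add_lt_add (sizeOf_lt_node hc) (sizeOf_lt_node hd)
      constructor
      · intro h
        cases h with
        | node hall =>
          have hall' := treeAllLE_iff.1 hall
          have hcomp : ∀ c ∈ s :: ss, SeqLE le (treeToSeq c) B := by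
            intro c hc
            obtain ⟨d, hd, hcd⟩ := hall' c hc
            have hseq := (IH c d (hszc c hc d hd)).1 hcd
            refine seqLE_trans ht hseq (le_concatAll hr ht ?_)
            rcases List.mem_cons.mp hd with rfl | hd'
            · exact Or.inl (seqLE_refl hr _)
            · exact Or.inr (List.mem_map_of_mem (f := treeToSeq) hd')
          obtain ⟨f, hf, hbf⟩ := concatAll_emb ht (ss.map treeToSeq) (treeToSeq s) 1
            (emb_omegaPow_of_le (hcomp s (List.mem_cons_self)))
            (fun ρ hρ => by
              obtain ⟨c, hc, rfl⟩ := List.mem_map.1 hρ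
              exact hcomp c (List.mem_cons_of_mem _ hc))
          exact omegaPow_emb ht hf hbf
      · intro hseq
        obtain ⟨g, hg⟩ := hseq
        refine TreeLE.node (treeAllLE_iff.2 ?_)
        intro c hc
        have hcA : SeqLE le (treeToSeq c) A := by
          apply le_concatAll hr ht
          rcases List.mem_cons.mp hc with rfl | hc'
          · exact Or.inl (seqLE_refl hr _)
          · exact Or.inr (List.mem_map_of_mem (f := treeToSeq) hc')
        obtain ⟨e, he1, he2, he3⟩ := hcA
        have hAlt : A.length < A.omegaPow.length := length_lt_omegaPow_length A
        have hemb : SeqEmb le (treeToSeq c) B.omegaPow (fun i => g (e i)) := by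
          refine ⟨fun i hi => hg.1 _ ((he1 i hi).trans hAlt), fun i j hij hj =>
            hg.2.1 _ _ (he2 i j hij hj) ((he1 j hj).trans hAlt), fun i hi => ?_⟩
          have hv1 := he3 i hi
          have hv2 := hg.2.2 (e i) ((he1 i hi).trans hAlt)
          rw [omegaPow_val, Ordinal.mod_eq_of_lt (he1 i hi)] at hv2
          exact ht hv1 hv2
        have hgl : g A.length < B.omegaPow.length := hg.1 _ hAlt
        rw [omegaPow_length] at hgl
        obtain ⟨m, hm⟩ := Ordinal.lt_omega0.1 ((Ordinal.div_lt B.length_pos.ne').2 hgl)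
        have hbound : g A.length < B.length * ((m + 1 : ℕ) : Ordinal) := by
          have h' := Ordinal.lt_mul_succ_div (g A.length) B.length_pos.ne'
          rwa [hm, ← Ordinal.add_one_eq_succ, ← Nat.cast_succ] at h'
        have hbnd : ∀ i, i < (treeToSeq c).length →
            g (e i) < B.length * ((m + 1 : ℕ) : Ordinal) := fun i hi =>
          (hg.2.1 _ _ (he1 i hi) hAlt).trans hbound
        have hcle : SeqLE le (treeToSeq c) B :=
          indec_le_of_bounded ht (treeToSeq_facts hr c).2.2 (m + 1) _ hemb hbnd
        rcases indec_le_concatAll ht (treeToSeq_facts hr c).2.2 hcle with h1 | ⟨ρ, hρ, h1⟩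
        · exact ⟨t, List.mem_cons_self,
            (IH c t (hszc c hc t (List.mem_cons_self))).2 h1⟩
        · obtain ⟨d, hd, rfl⟩ := List.mem_map.1 hρ
          exact ⟨d, List.mem_cons_of_mem _ hd,
            (IH c d (hszc c hc d (List.mem_cons_of_mem _ hd))).2 h1⟩

end Aux

/-- For any nonempty quasi-order `(Q, ≤_Q)`, the map `f : T_f(Q) → i^F_{ω^ω}(Q)`
defined by `f(·q) = ⟨q⟩` and `f(·(τ₀,…,τ_{k-1})) = (f(τ₀) + ⋯ + f(τ_{k-1}))^ω`
is a well-defined order-embedding: every value is an indecomposable finite-range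
sequence of length `< ω^ω`, and `σ ≤_T τ ↔ f(σ) ≼ f(τ)`. -/
theorem treeToSeq_orderEmbedding {Q : Type u} [Nonempty Q]
    (le : Q → Q → Prop) (hqo : IsQO le) :
    (∀ τ : LTree Q, (treeToSeq τ).length < omega0 ^ omega0 ∧
      (treeToSeq τ).FinRange ∧ Indecomposable le (treeToSeq τ)) ∧
    (∀ σ τ : LTree Q, TreeLE le σ τ ↔ SeqLE le (treeToSeq σ) (treeToSeq τ)) := by
  obtain ⟨hr, ht⟩ := hqo
  exact ⟨treeToSeq_facts hr, treeToSeq_iff hr ht⟩
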